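/- Let N be a zero-symmetric near-ring with identity satisfying the DCCN. Then an element n : N is a unit if and only if the right translation map ψ_n : N → N, m ↦ m*n, is injective. -/

import Mathlib

/-- In a zero-symmetric near-ring with identity satisfying the DCCN,
an element is a unit iff its right translation map is injective. -/
theorem stmt1 {N : Type*} [AddGroup N] [Mul N] [One N]
    (hassoc : ∀ a b c : N, (a * b) * c = a * (b * c))
    (hdist : ∀ a b c : N, (a + b) * c = a * c + b * c)
    (honel : ∀ a : N, 1 * a = a) (honer : ∀ a : N, a * 1 = a)
    (hzero : ∀ a : N, a * 0 = 0)
    (hdcc : ∀ f : ℕ → AddSubgroup N, Antitone f →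
      (∀ i : ℕ, ∀ n : N, ∀ m ∈ f i, n * m ∈ f i) →
      ∃ k : ℕ, ∀ j ≥ k, f j = f k)
    (n : N) :
    (∃ v : N, n * v = 1 ∧ v * n = 1) ↔ Function.Injective (fun m : N => m * n) := by
  have hzl : ∀ a : N, (0:N) * a = 0 := by
    intro a
    have h := hdist 0 0 a
    rw [add_zero] at h
    have := add_left_cancel (a := (0:N)*a) (b := 0) (c := (0:N)*a)
    nth_rewrite 1 [h] at this
    exact (this (by rw [add_zero])).symm
  constructor
  · rintro ⟨v, hnv, hvn⟩ a b hab
    simp only at hab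
    calc a = (a * n) * v := by rw [hassoc, hnv, honer]
    _ = (b * n) * v := by rw [hab]
    _ = b := by rw [hassoc, hnv, honer]
  · intro hinj
    set φ : AddMonoid.End N :=
      { toFun := fun m => m * n
        map_zero' := hzl n
        map_add' := fun a b => hdist a b n } with hφ
    have hφ_apply : ∀ m : N, φ m = m * n := fun _ => rfl
    have hφ_mul : ∀ (i : ℕ) (a x : N), (φ^i) (a * x) = a * (φ^i) x := by
      intro i
      induction i with
      | zero => intro a x; simp
      | succ i ih =>
        intro a x
        rw [pow_succ]
        show (φ^i) (φ (a*x)) = a * (φ^i) (φ x)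
        rw [hφ_apply, hassoc, ← hφ_apply, ih]
    have hφ_inj : ∀ i : ℕ, Function.Injective ((φ^i : AddMonoid.End N) : N → N) := by
      intro i
      induction i with
      | zero => simpa using Function.injective_id
      | succ i ih =>
        rw [pow_succ]
        exact fun a b h => hinj (ih h)
    set f : ℕ → AddSubgroup N := fun i => ((φ^i : AddMonoid.End N) : N →+ N).range with hf
    have hanti : Antitone f := by
      apply antitone_nat_of_succ_le
      intro i x hx
      obtain ⟨y, hy⟩ := hx
      exact ⟨φ y, by rw [← hy]; rfl⟩
    have hideal : ∀ i : ℕ, ∀ a : N, ∀ m ∈ f i, a * m ∈ f i := by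
      rintro i a m ⟨y, hy⟩
      exact ⟨a * y, by rw [← hy]; exact hφ_mul i a y⟩
    obtain ⟨k, hk⟩ := hdcc f hanti hideal
    have hmem : (φ^k) 1 ∈ f (k+1) := by
      rw [hk (k+1) (by omega)]
      exact ⟨1, rfl⟩
    obtain ⟨w, hw⟩ := hmem
    have hw' : (φ^k) (w * n) = (φ^k) 1 := by
      rw [← hw, pow_succ]; rfl
    have hwn : w * n = 1 := hφ_inj k hw'
    have hnw : n * w = 1 := by
      apply hinj
      show (n * w) * n = 1 * n
      rw [hassoc, hwn, honer, honel]
    exact ⟨w, hnw, hwn⟩
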